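/- Fix integers d ≥ 2 and 1 ≤ ℓ ≤ d−1. For every ε > 0 there exists an integer N ≥ 1 with the following property. Let B be a linear automorphism of ℂ^d admitting a basis of eigenvectors θ_1,…,θ_d whose eigenvalues have pairwise distinct absolute values, and let W ⊆ ℂ^d be a subspace of dimension d−ℓ such that W ∩ span{θ_i : i ∈ S} = {0} for every S ⊆ {1,…,d} with #S = ℓ. Then for every ε-dense subset J ⊆ {0,1,…,N−1} there is no ℓ-dimensional subspace E ⊆ ℂ^d satisfying E ∩ B^j(W) ≠ {0} for every j ∈ J. (Equivalently, the iterates ⋂_{j∈J} B^j(V) of the hyperplane section V = {E : dim E = ℓ, E ∩ W ≠ {0}} of the Grassmannian have empty intersection.) -/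

import Mathlib

open Finset

set_option linter.unusedSectionVars false

lemma densePair (N T : ℕ) (hT : 1 ≤ T) (ε : ℝ) (hε : 0 < ε) (hTε : 4 ≤ ε * T)
    (hNT : T ≤ N) (J : Finset ℕ) (hJ : J ⊆ Finset.range N) (hcard : ε * N ≤ (J.card : ℝ)) :
    ∃ t, 1 ≤ t ∧ t ≤ T ∧ ε / (2 * T) * N ≤ ((J.filter fun j => j + t ∈ J).card : ℝ) := by
  classical
  have hN1 : (1:ℝ) ≤ N := by exact_mod_cast le_trans hT hNT
  have hNpos : (0:ℝ) < N := lt_of_lt_of_le one_pos hN1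
  have hTpos : (0:ℝ) < T := by exact_mod_cast hT
  set G : Finset ℕ := J.filter (fun j => ∃ t, 1 ≤ t ∧ t ≤ T ∧ j + t ∈ J) with hG
  have hsep : ∀ a ∈ J \ G, ∀ b ∈ J, a < b → a + T < b := by
    intro a ha b hb h
    rcases mem_sdiff.mp ha with ⟨haJ, haG⟩
    by_contra hle
    push_neg at hle
    exact haG (mem_filter.mpr ⟨haJ, ⟨b - a, by omega, by omega, by
      have : a + (b - a) = b := by omega
      rwa [this]⟩⟩)
  -- bad set bound
  have hbadn : (J \ G).card ≤ N / T + 1 := by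
    have hmaps : ∀ a ∈ J \ G, a / T ∈ Finset.range (N / T + 1) := by
      intro a ha
      have : a < N := by
        have := hJ (mem_sdiff.mp ha).1
        simpa using this
      exact mem_range.mpr (Nat.lt_succ_of_le (Nat.div_le_div_right this.le))
    have hinj : ∀ a ∈ J \ G, ∀ b ∈ J \ G, a / T = b / T → a = b := by
      intro a ha b hb hab
      by_contra hne
      rcases Nat.lt_or_ge a b with h | h
      · have h2 := hsep a ha b (mem_sdiff.mp hb).1 h
        have : a / T + 1 ≤ b / T := by
          calc a / T + 1 = (a + T) / T := by rw [Nat.add_div_right _ hT]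
          _ ≤ b / T := Nat.div_le_div_right (by omega)
        omega
      · have h' : b < a := by omega
        have h2 := hsep b hb a (mem_sdiff.mp ha).1 h'
        have : b / T + 1 ≤ a / T := by
          calc b / T + 1 = (b + T) / T := by rw [Nat.add_div_right _ hT]
          _ ≤ a / T := Nat.div_le_div_right (by omega)
        omega
    calc (J \ G).card ≤ (Finset.range (N / T + 1)).card :=
          Finset.card_le_card_of_injOn (· / T) hmaps hinj
      _ = N / T + 1 := by simp
  have hbad : ((J \ G).card : ℝ) ≤ (N:ℝ)/T + 1 := by
    calc ((J \ G).card : ℝ) ≤ ((N / T + 1 : ℕ) : ℝ) := by exact_mod_cast hbadn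
      _ ≤ (N:ℝ)/T + 1 := by
          push_cast
          have := Nat.cast_div_le (m := N) (n := T) (α := ℝ)
          linarith
  have h1 : (N:ℝ)/T ≤ ε * N / 4 := by
    rw [div_le_div_iff₀ hTpos (by norm_num : (0:ℝ) < 4)]
    nlinarith
  have h2 : (1:ℝ) ≤ ε * N / 4 := by
    have : (4:ℝ) ≤ ε * N := le_trans hTε (by
      have : (T:ℝ) ≤ N := by exact_mod_cast hNT
      nlinarith)
    linarith
  have hGcard : ε * N / 2 ≤ (G.card : ℝ) := by
    have hsub : G ⊆ J := filter_subset _ _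
    have : (J.card : ℝ) = (G.card : ℝ) + ((J \ G).card : ℝ) := by
      rw [← Nat.cast_add]
      norm_cast
      rw [Finset.card_sdiff_of_subset hsub]
      have := Finset.card_le_card hsub
      omega
    have hJG : ((J \ G).card : ℝ) ≤ ε * N / 2 := by linarith
    linarith
  -- G covered by the filters
  have hcover : G ⊆ (Finset.Icc 1 T).biUnion (fun t => J.filter fun j => j + t ∈ J) := by
    intro j hj
    rcases mem_filter.mp hj with ⟨hjJ, t, ht1, ht2, htJ⟩
    exact mem_biUnion.mpr ⟨t, mem_Icc.mpr ⟨ht1, ht2⟩, mem_filter.mpr ⟨hjJ, htJ⟩⟩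
  have hsum : (G.card : ℝ) ≤ ∑ t ∈ Finset.Icc 1 T, ((J.filter fun j => j + t ∈ J).card : ℝ) := by
    calc (G.card : ℝ) ≤ (((Finset.Icc 1 T).biUnion (fun t => J.filter fun j => j + t ∈ J)).card : ℝ) := by
          exact_mod_cast Finset.card_le_card hcover
      _ ≤ _ := by exact_mod_cast Finset.card_biUnion_le
  by_contra hcon
  push_neg at hcon
  have hstrict : ∑ t ∈ Finset.Icc 1 T, ((J.filter fun j => j + t ∈ J).card : ℝ)
      < ∑ t ∈ Finset.Icc 1 T, (ε / (2 * T) * N) := by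
    apply Finset.sum_lt_sum_of_nonempty
    · exact ⟨1, mem_Icc.mpr ⟨le_refl 1, hT⟩⟩
    · intro t ht
      rcases mem_Icc.mp ht with ⟨h1', h2'⟩
      exact hcon t h1' h2'
  have : ∑ t ∈ Finset.Icc 1 T, (ε / (2 * T) * N) = ε * N / 2 := by
    rw [Finset.sum_const, Nat.card_Icc]
    simp only [nsmul_eq_mul]
    have : ((T + 1 - 1 : ℕ) : ℝ) = T := by norm_cast
    rw [this]
    field_simp
  linarith

lemma expsum : ∀ (m : ℕ) (ε : ℝ), 0 < ε → ∃ N0 : ℕ, 1 ≤ N0 ∧ ∀ N, N0 ≤ N →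
    ∀ (a : ℂ) (c ρ : Fin m → ℂ), a ≠ 0 → (∀ k, ‖ρ k‖ < 1) →
    ∀ J : Finset ℕ, J ⊆ Finset.range N → ε * N ≤ (J.card : ℝ) →
    ∃ j ∈ J, a + ∑ k, c k * ρ k ^ j ≠ 0 := by
  intro m
  induction m with
  | zero =>
    intro ε hε
    refine ⟨1, le_refl 1, ?_⟩
    intro N hN a c ρ ha _ J hJ hcard
    have hNpos : (0:ℝ) < N := by exact_mod_cast hN
    have hc : (0:ℝ) < (J.card : ℝ) := lt_of_lt_of_le (mul_pos hε hNpos) hcard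
    have : 0 < J.card := by exact_mod_cast hc
    obtain ⟨j, hj⟩ := Finset.card_pos.mp this
    exact ⟨j, hj, by simpa using ha⟩
  | succ m IH =>
    intro ε hε
    set T : ℕ := max 1 ⌈4 / ε⌉₊ with hTdef
    have hT1 : 1 ≤ T := le_max_left _ _
    have hTε : 4 ≤ ε * T := by
      have h1 : (4:ℝ)/ε ≤ ⌈4/ε⌉₊ := Nat.le_ceil _
      have h2 : ((⌈4/ε⌉₊ : ℕ) : ℝ) ≤ T := by exact_mod_cast le_max_right 1 ⌈4/ε⌉₊
      calc (4:ℝ) = ε * (4/ε) := by field_simp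
        _ ≤ ε * T := by nlinarith
    have hε' : 0 < ε / (2 * T) := by positivity
    obtain ⟨N0', hN0'1, hIH⟩ := IH (ε / (2 * T)) hε'
    refine ⟨max N0' T, le_trans hN0'1 (le_max_left _ _), ?_⟩
    intro N hN a c ρ ha hρ J hJ hcard
    by_contra hcon
    push_neg at hcon
    obtain ⟨t, ht1, htT, htcard⟩ := densePair N T hT1 ε hε hTε (le_trans (le_max_right _ _) hN) J hJ hcard
    set ρl := ρ (Fin.last m) with hρl
    have hρlt : ‖ρl ^ t‖ < 1 := by
      rw [norm_pow]
      exact pow_lt_one₀ (norm_nonneg _) (hρ _) (by omega)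
    have hone : (1 : ℂ) - ρl ^ t ≠ 0 := by
      intro h
      have : ρl ^ t = 1 := by linear_combination -h
      rw [this] at hρlt
      simp at hρlt
    have ha' : a * (1 - ρl ^ t) ≠ 0 := mul_ne_zero ha hone
    obtain ⟨j, hjmem, hjne⟩ := hIH N (le_trans (le_max_left _ _) hN)
      (a * (1 - ρl ^ t))
      (fun k => c k.castSucc * (ρ k.castSucc ^ t - ρl ^ t))
      (fun k => ρ k.castSucc) ha' (fun k => hρ _)
      (J.filter fun j => j + t ∈ J) ((filter_subset _ _).trans hJ) htcard
    rcases mem_filter.mp hjmem with ⟨hjJ, hjtJ⟩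
    have e1 : a + ∑ k, c k * ρ k ^ j = 0 := hcon j hjJ
    have e2 : a + ∑ k, c k * ρ k ^ (j + t) = 0 := hcon (j + t) hjtJ
    apply hjne
    have expand : a * (1 - ρl ^ t) + ∑ k : Fin m,
        (c k.castSucc * (ρ k.castSucc ^ t - ρl ^ t)) * ρ k.castSucc ^ j
        = (a + ∑ k, c k * ρ k ^ (j + t)) - ρl ^ t * (a + ∑ k, c k * ρ k ^ j) := by
      have hsum : ∑ k : Fin m, (c k.castSucc * (ρ k.castSucc ^ t - ρl ^ t)) * ρ k.castSucc ^ j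
          = (∑ k : Fin m, c k.castSucc * ρ k.castSucc ^ (j + t))
            - ρl ^ t * ∑ k : Fin m, c k.castSucc * ρ k.castSucc ^ j := by
        rw [Finset.mul_sum, ← Finset.sum_sub_distrib]
        refine Finset.sum_congr rfl (fun k _ => ?_)
        rw [pow_add]
        ring
      rw [hsum, Fin.sum_univ_castSucc (f := fun k => c k * ρ k ^ (j + t)),
          Fin.sum_univ_castSucc (f := fun k => c k * ρ k ^ j)]
      simp only [← hρl]
      rw [pow_add]
      ring
    rw [expand, e1, e2]
    ring

lemma expsum' (κ : Type) [Fintype κ] [DecidableEq κ] (ε : ℝ) (hε : 0 < ε) :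
    ∃ N0 : ℕ, 1 ≤ N0 ∧ ∀ N, N0 ≤ N →
    ∀ (c lam : κ → ℂ) (k0 : κ), c k0 ≠ 0 → lam k0 ≠ 0 →
    (∀ k, k ≠ k0 → c k = 0 ∨ ‖lam k‖ < ‖lam k0‖) →
    ∀ J : Finset ℕ, J ⊆ Finset.range N → ε * N ≤ (J.card : ℝ) →
    ∃ j ∈ J, ∑ k, c k * lam k ^ j ≠ 0 := by
  obtain ⟨N0, hN01, H⟩ := expsum (Fintype.card κ - 1) ε hε
  refine ⟨N0, hN01, ?_⟩
  intro N hN c lam k0 hc0 hlam0 hdom J hJ hcard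
  have hcardsub : Fintype.card {k : κ // k ≠ k0} = Fintype.card κ - 1 := by
    rw [Fintype.card_subtype_compl, Fintype.card_subtype_eq]
  let e : {k : κ // k ≠ k0} ≃ Fin (Fintype.card κ - 1) :=
    Fintype.equivFinOfCardEq hcardsub
  set ρ : Fin (Fintype.card κ - 1) → ℂ := fun i =>
    if c (e.symm i).1 = 0 then 0 else lam (e.symm i).1 / lam k0 with hρdef
  have hρ : ∀ i, ‖ρ i‖ < 1 := by
    intro i
    rw [hρdef]
    by_cases h : c (e.symm i).1 = 0
    · simp [h]
    · simp only [h, if_false]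
      rcases hdom (e.symm i).1 (e.symm i).2 with h' | h'
      · exact absurd h' h
      · rw [norm_div, div_lt_one (norm_pos_iff.mpr hlam0)]
        exact h'
  obtain ⟨j, hjJ, hjne⟩ := H N hN (c k0) (fun i => c (e.symm i).1) ρ hc0 hρ J hJ hcard
  refine ⟨j, hjJ, ?_⟩
  have key : ∑ k, c k * lam k ^ j
      = lam k0 ^ j * (c k0 + ∑ i, c (e.symm i).1 * ρ i ^ j) := by
    have hterm : ∀ i : Fin (Fintype.card κ - 1),
        lam k0 ^ j * (c (e.symm i).1 * ρ i ^ j) = c (e.symm i).1 * lam (e.symm i).1 ^ j := by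
      intro i
      rw [hρdef]
      by_cases h : c (e.symm i).1 = 0
      · simp [h]
      · simp only [h, if_false]
        field_simp [div_pow]
        rw [div_pow, mul_div_assoc', mul_div_cancel_left₀ _ (pow_ne_zero _ hlam0)]
    have h1 : ∑ i, lam k0 ^ j * (c (e.symm i).1 * ρ i ^ j)
        = ∑ i, c (e.symm i).1 * lam (e.symm i).1 ^ j :=
      Finset.sum_congr rfl (fun i _ => hterm i)
    have h2 : ∑ i, c (e.symm i).1 * lam (e.symm i).1 ^ j
        = ∑ s : {k : κ // k ≠ k0}, c s.1 * lam s.1 ^ j :=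
      Equiv.sum_comp e.symm (fun s => c s.1 * lam s.1 ^ j)
    have h3 : ∑ s : {k : κ // k ≠ k0}, c s.1 * lam s.1 ^ j
        = ∑ k ∈ Finset.univ.erase k0, c k * lam k ^ j :=
      (Finset.sum_subtype (p := fun k => k ≠ k0) (Finset.univ.erase k0)
        (fun k => by simp [Finset.mem_erase]) (fun k => c k * lam k ^ j)).symm
    calc ∑ k, c k * lam k ^ j
        = c k0 * lam k0 ^ j + ∑ k ∈ Finset.univ.erase k0, c k * lam k ^ j :=
          (Finset.add_sum_erase _ _ (Finset.mem_univ k0)).symm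
      _ = lam k0 ^ j * (c k0 + ∑ i, c (e.symm i).1 * ρ i ^ j) := by
          rw [mul_add, Finset.mul_sum, h1, h2, h3]
          ring
  rw [key]
  exact mul_ne_zero (pow_ne_zero _ hlam0) hjne

section aux
variable {ι V : Type*} [Fintype ι] [DecidableEq ι] [AddCommGroup V] [Module ℂ V]

def SIndep (v : ι → V) (T : Finset ι) : Prop :=
  ∀ g : ι → ℂ, ∑ i ∈ T, g i • v i = 0 → ∀ i ∈ T, g i = 0

def SSpans (v : ι → V) (T : Finset ι) : Prop :=
  ∀ j : ι, ∃ g : ι → ℂ, v j = ∑ i ∈ T, g i • v i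


lemma sindep_iff (v : ι → V) (T : Finset ι) :
    SIndep v T ↔ LinearIndependent ℂ (fun i : ↑T => v i) := by
  classical
  rw [Fintype.linearIndependent_iff]
  constructor
  · intro hS g hg i
    set g' : ι → ℂ := fun i => if h : i ∈ T then g ⟨i, h⟩ else 0 with hg'
    have hsum : ∑ i ∈ T, g' i • v i = 0 := by
      rw [← Finset.sum_attach T (fun i => g' i • v i)]
      rw [← hg]
      rw [Finset.univ_eq_attach]
      refine Finset.sum_congr rfl (fun i _ => ?_)
      simp [hg', i.2]
    have := hS g' hsum i.1 i.2
    simpa [hg', i.2] using this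
  · intro hL g hg i hi
    have hsum : ∑ i : ↑T, (g i.1) • v i.1 = 0 := by
      rw [Finset.univ_eq_attach, Finset.sum_attach T (fun i => g i • v i)]
      exact hg
    exact hL (fun i => g i.1) hsum ⟨i, hi⟩

lemma scard_le [FiniteDimensional ℂ V] (v : ι → V) (T : Finset ι) (h : SIndep v T) :
    T.card ≤ Module.finrank ℂ V := by
  have := ((sindep_iff v T).mp h).fintype_card_le_finrank
  simpa [Fintype.card_coe] using this

lemma sspans_of_card [FiniteDimensional ℂ V] (v : ι → V) (T : Finset ι) (hi : SIndep v T)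
    (hc : T.card = Module.finrank ℂ V) : SSpans v T := by
  classical
  intro j
  rcases Nat.eq_zero_or_pos T.card with h0 | hpos
  · have : Module.finrank ℂ V = 0 := by omega
    have : Subsingleton V := Module.finrank_zero_iff.mp this
    exact ⟨0, by rw [Subsingleton.elim (v j) 0]; simp⟩
  · have hne : Nonempty ↑T := by
      rcases Finset.card_pos.mp hpos with ⟨x, hx⟩
      exact ⟨⟨x, hx⟩⟩
    have hcard : Fintype.card ↑T = Module.finrank ℂ V := by
      rwa [Fintype.card_coe]
    let b := basisOfLinearIndependentOfCardEqFinrank ((sindep_iff v T).mp hi) hcard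
    have hb : ⇑b = fun i : ↑T => v i.1 := coe_basisOfLinearIndependentOfCardEqFinrank _ _
    have hmem : v j ∈ Submodule.span ℂ (Set.range fun i : ↑T => v i.1) := by
      rw [← hb]
      exact Module.Basis.mem_span b (v j)
    obtain ⟨c, hcsum⟩ := (Submodule.mem_span_range_iff_exists_fun ℂ).mp hmem
    refine ⟨fun i => if h : i ∈ T then c ⟨i, h⟩ else 0, ?_⟩
    rw [← hcsum, Finset.univ_eq_attach, ← Finset.sum_attach T
      (fun i => (if h : i ∈ T then c ⟨i, h⟩ else 0) • v i)]
    refine Finset.sum_congr rfl (fun i _ => ?_)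
    simp [i.2]

lemma sexchange (v : ι → V) (w : ι → ℝ) (hw0 : ∀ i, 0 < w i)
    (T T' : Finset ι) (hT : SIndep v T) (hT'i : SIndep v T') (hT's : SSpans v T')
    (a : ι) (haT : a ∈ T) (haT' : a ∉ T') (hwa : ∀ b ∈ T', b ∉ T → w a < w b) :
    ∃ T'' : Finset ι, T''.card = T'.card ∧ SIndep v T'' ∧ SSpans v T'' ∧
      ∏ i ∈ T'', w i < ∏ i ∈ T', w i := by
  classical
  obtain ⟨c, hc⟩ := hT's a
  have hb : ∃ b ∈ T', b ∉ T ∧ c b ≠ 0 := by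
    by_contra hcon
    push_neg at hcon
    set g : ι → ℂ := fun i => if i = a then (-1) else if i ∈ T' then c i else 0 with hg
    have e1 : ∑ i ∈ T.erase a, g i • v i = ∑ i ∈ (T.erase a).filter (· ∈ T'), c i • v i := by
      rw [Finset.sum_filter]
      refine Finset.sum_congr rfl (fun i hi => ?_)
      have hia : i ≠ a := Finset.ne_of_mem_erase hi
      by_cases h2 : i ∈ T' <;> simp [hg, hia, h2]
    have e2 : ∑ i ∈ T', c i • v i = ∑ i ∈ (T.erase a).filter (· ∈ T'), c i • v i := by
      refine (Finset.sum_subset ?_ ?_).symm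
      · intro i hi
        exact (Finset.mem_filter.mp hi).2
      · intro i hiT' hinot
        have : i ∉ T.erase a := fun h => hinot (Finset.mem_filter.mpr ⟨h, hiT'⟩)
        have hia : i ≠ a := fun h => haT' (h ▸ hiT')
        have hiT : i ∉ T := fun h => this (Finset.mem_erase.mpr ⟨hia, h⟩)
        rw [hcon i hiT' hiT, zero_smul]
    have hsum : ∑ i ∈ T, g i • v i = 0 := by
      rw [← Finset.add_sum_erase _ _ haT, e1, ← e2, ← hc]
      have : g a = -1 := by simp [hg]
      rw [this]
      simp
    have := hT g hsum a haT
    simp [hg] at this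
  obtain ⟨b, hbT', hbT, hcb⟩ := hb
  have hab : a ≠ b := fun h => haT' (h ▸ hbT')
  have haE : a ∉ T'.erase b := fun h => haT' (Finset.mem_of_mem_erase h)
  have hT'card : 1 ≤ T'.card := Finset.card_pos.mpr ⟨b, hbT'⟩
  refine ⟨insert a (T'.erase b), ?_, ?_, ?_, ?_⟩
  · rw [Finset.card_insert_of_notMem haE, Finset.card_erase_of_mem hbT']
    omega
  · -- SIndep
    intro g hsum i hi
    set h : ι → ℂ := fun i => g a * c i + (if i = b then 0 else g i) with hh
    have hsplit : ∑ i ∈ T', h i • v i = g a • v a + ∑ i ∈ T'.erase b, g i • v i := by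
      have : ∀ i ∈ T', h i • v i = (g a * c i) • v i + (if i = b then 0 else g i) • v i := by
        intro i _
        rw [hh, add_smul]
      rw [Finset.sum_congr rfl this, Finset.sum_add_distrib]
      congr 1
      · rw [hc, Finset.smul_sum]
        exact Finset.sum_congr rfl (fun i _ => by rw [smul_smul])
      · rw [← Finset.add_sum_erase _ _ hbT', if_pos rfl, zero_smul, zero_add]
        refine Finset.sum_congr rfl (fun i hi => ?_)
        rw [if_neg (Finset.ne_of_mem_erase hi)]
    have hsum' : ∑ i ∈ T', h i • v i = 0 := by
      rw [Finset.sum_insert haE] at hsum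
      rw [hsplit]
      exact hsum
    have hzero := hT'i h hsum'
    have hga : g a = 0 := by
      have h2 := hzero b hbT'
      have h3 : g a * c b = 0 := by simpa [hh] using h2
      exact (mul_eq_zero.mp h3).resolve_right hcb
    rcases Finset.mem_insert.mp hi with h' | h'
    · rw [h']; exact hga
    · have hib : i ≠ b := Finset.ne_of_mem_erase h'
      have := hzero i (Finset.mem_of_mem_erase h')
      simp [hh, hib, hga] at this
      exact this
  · -- SSpans
    intro j
    obtain ⟨c', hc'⟩ := hT's j
    refine ⟨fun i => if i = a then c' b / c b else c' i - c' b / c b * c i, ?_⟩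
    rw [Finset.sum_insert haE]
    beta_reduce
    rw [if_pos rfl]
    have hrw : ∀ i ∈ T'.erase b,
        (if i = a then c' b / c b else c' i - c' b / c b * c i) • v i
        = c' i • v i - (c' b / c b) • (c i • v i) := by
      intro i hi
      have hia : i ≠ a := fun h => haE (h ▸ hi)
      rw [if_neg hia, sub_smul, mul_smul]
    rw [Finset.sum_congr rfl hrw, Finset.sum_sub_distrib, ← Finset.smul_sum]
    have hva : v a = c b • v b + ∑ i ∈ T'.erase b, c i • v i := by
      rw [hc, ← Finset.add_sum_erase _ _ hbT']
    rw [hva, smul_add, smul_smul, div_mul_cancel₀ _ hcb]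
    have hvj : v j = c' b • v b + ∑ i ∈ T'.erase b, c' i • v i := by
      rw [hc', ← Finset.add_sum_erase _ _ hbT']
    rw [hvj]
    abel
  · -- weight
    rw [Finset.prod_insert haE]
    have h1 : ∏ i ∈ T', w i = w b * ∏ i ∈ T'.erase b, w i := (Finset.mul_prod_erase _ _ hbT').symm
    rw [h1]
    have hpos : 0 < ∏ i ∈ T'.erase b, w i := Finset.prod_pos (fun i _ => hw0 i)
    have := hwa b hbT' hbT
    nlinarith

lemma min_strict (v : ι → V) (w : ι → ℝ) (hw0 : ∀ i, 0 < w i)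
    (hwinj : Function.Injective w) (r : ℕ) (Ts : Finset ι)
    (hTsc : Ts.card = r) (hTsi : SIndep v Ts) (hTss : SSpans v Ts)
    (hmin : ∀ T : Finset ι, T.card = r → SIndep v T → SSpans v T →
      ∏ i ∈ Ts, w i ≤ ∏ i ∈ T, w i)
    (T : Finset ι) (hTc : T.card = r) (hTi : SIndep v T) (hTs : SSpans v T)
    (hne : T ≠ Ts) : ∏ i ∈ Ts, w i < ∏ i ∈ T, w i := by
  classical
  rcases lt_or_eq_of_le (hmin T hTc hTi hTs) with h | h
  · exact h
  exfalso
  have hTT : (T \ Ts).Nonempty := by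
    rw [Finset.sdiff_nonempty]
    intro hsub
    exact hne (Finset.eq_of_subset_of_card_le hsub (by omega))
  have hD : ((T \ Ts) ∪ (Ts \ T)).Nonempty := hTT.mono Finset.subset_union_left
  obtain ⟨a, haD, hamin⟩ := Finset.exists_min_image _ w hD
  rcases Finset.mem_union.mp haD with ha | ha
  · rcases Finset.mem_sdiff.mp ha with ⟨haT, haTs⟩
    obtain ⟨T'', hc'', hi'', hs'', hw''⟩ := sexchange v w hw0 T Ts hTi hTsi hTss a haT haTs
      (fun b hb hbT => lt_of_le_of_ne
        (hamin b (Finset.mem_union_right _ (Finset.mem_sdiff.mpr ⟨hb, hbT⟩)))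
        (fun he => haTs (by rw [hwinj he]; exact hb)))
    have := hmin T'' (by omega) hi'' hs''
    linarith
  · rcases Finset.mem_sdiff.mp ha with ⟨haTs, haT⟩
    obtain ⟨T'', hc'', hi'', hs'', hw''⟩ := sexchange v w hw0 Ts T hTsi hTi hTs a haTs haT
      (fun b hb hbTs => lt_of_le_of_ne
        (hamin b (Finset.mem_union_left _ (Finset.mem_sdiff.mpr ⟨hb, hbTs⟩)))
        (fun he => haT (by rw [hwinj he]; exact hb)))
    have := hmin T'' (by omega) hi'' hs''
    linarith

lemma sspans_shrink (v : ι → V) : ∀ (n : ℕ) (T : Finset ι), T.card ≤ n → SSpans v T →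
    ∃ T' ⊆ T, SIndep v T' ∧ SSpans v T' := by
  intro n
  induction n with
  | zero =>
    intro T hT hsp
    have hT0 : T = ∅ := Finset.card_eq_zero.mp (by omega)
    subst hT0
    refine ⟨∅, subset_rfl, fun g _ i hi => absurd hi (Finset.notMem_empty i), hsp⟩
  | succ n ih =>
    intro T hT hsp
    by_cases hi : SIndep v T
    · exact ⟨T, subset_rfl, hi, hsp⟩
    · rw [SIndep] at hi
      push_neg at hi
      obtain ⟨g, hg0, i0, hi0T, hgi0⟩ := hi
      have hv0 : g i0 • v i0 + ∑ i ∈ T.erase i0, g i • v i = 0 := by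
        rw [Finset.add_sum_erase T (fun i => g i • v i) hi0T]; exact hg0
      have hsum : ∑ i ∈ T.erase i0, g i • v i = -(g i0 • v i0) := by
        linear_combination (norm := module) hv0
      have hsp' : SSpans v (T.erase i0) := by
        intro j
        obtain ⟨c, hc⟩ := hsp j
        refine ⟨fun i => c i - c i0 / g i0 * g i, ?_⟩
        have e1 : ∑ i ∈ T.erase i0, (c i - c i0 / g i0 * g i) • v i
            = ∑ i ∈ T.erase i0, c i • v i - (c i0 / g i0) • ∑ i ∈ T.erase i0, g i • v i := by
          rw [Finset.smul_sum, ← Finset.sum_sub_distrib]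
          refine Finset.sum_congr rfl (fun i _ => ?_)
          rw [sub_smul, smul_smul]
        rw [e1, hsum, hc, ← Finset.add_sum_erase _ _ hi0T]
        rw [smul_neg, smul_smul, div_mul_cancel₀ _ hgi0]
        abel
      obtain ⟨T', hT'sub, h1, h2⟩ := ih (T.erase i0)
        (by rw [Finset.card_erase_of_mem hi0T]; omega) hsp'
      exact ⟨T', hT'sub.trans (Finset.erase_subset _ _), h1, h2⟩

lemma sspans_card_ge [FiniteDimensional ℂ V] (v : ι → V) (T : Finset ι) (hsp : SSpans v T)
    (htop : Submodule.span ℂ (Set.range v) = ⊤) : Module.finrank ℂ V ≤ T.card := by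
  classical
  have h1 : Submodule.span ℂ (v '' ↑T) = ⊤ := by
    rw [eq_top_iff, ← htop]
    rw [Submodule.span_le]
    rintro x ⟨j, rfl⟩
    obtain ⟨g, hg⟩ := hsp j
    rw [hg]
    exact Submodule.sum_mem _ (fun i hi => Submodule.smul_mem _ _
      (Submodule.subset_span ⟨i, hi, rfl⟩))
  have h2 : v '' ↑T = ↑(T.image v) := (Finset.coe_image).symm
  have h3 : Module.finrank ℂ ↥(Submodule.span ℂ (↑(T.image v) : Set V)) ≤ (T.image v).card := by
    simpa [Set.finrank] using finrank_span_finset_le_card (T.image v)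
  rw [h2] at h1
  calc Module.finrank ℂ V = Module.finrank ℂ ↥(Submodule.span ℂ (↑(T.image v) : Set V)) := by
        rw [h1, finrank_top]
    _ ≤ (T.image v).card := h3
    _ ≤ T.card := Finset.card_image_le

end aux

lemma notinj_of_finrank_lt {V W : Type*} [AddCommGroup V] [Module ℂ V] [AddCommGroup W]
    [Module ℂ W] [FiniteDimensional ℂ V] [FiniteDimensional ℂ W] (f : V →ₗ[ℂ] W)
    (h : Module.finrank ℂ W < Module.finrank ℂ V) : ∃ x : V, x ≠ 0 ∧ f x = 0 := by
  by_contra hcon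
  push_neg at hcon
  have hinj : Function.Injective f := by
    rw [← LinearMap.ker_eq_bot]
    refine (Submodule.eq_bot_iff _).mpr (fun x hx => ?_)
    by_contra hne
    exact hcon x hne (LinearMap.mem_ker.mp hx)
  have := LinearMap.finrank_le_finrank_of_injective hinj
  omega

lemma exists_ne_zero_coord {n : Type*} (x : n → ℂ) (h : x ≠ 0) : ∃ k, x k ≠ 0 := by
  by_contra hcon
  push_neg at hcon
  exact h (funext hcon)


set_option maxHeartbeats 1000000 in
theorem stmt0 (d ℓ : ℕ) (hd : 2 ≤ d) (hℓ1 : 1 ≤ ℓ) (hℓd : ℓ ≤ d - 1)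
    (ε : ℝ) (hε : 0 < ε) :
    ∃ N : ℕ, 1 ≤ N ∧
      ∀ (B : (Fin d → ℂ) ≃ₗ[ℂ] (Fin d → ℂ)) (θ : Module.Basis (Fin d) ℂ (Fin d → ℂ))
        (μ : Fin d → ℂ),
        (∀ i, B (θ i) = μ i • θ i) →
        (∀ i j, i ≠ j → ‖μ i‖ ≠ ‖μ j‖) →
        ∀ W : Submodule ℂ (Fin d → ℂ), Module.finrank ℂ W = d - ℓ →
        (∀ S : Finset (Fin d), S.card = ℓ →
          W ⊓ Submodule.span ℂ (⇑θ '' (S : Set (Fin d))) = ⊥) →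
        ∀ J : Finset ℕ, J ⊆ Finset.range N → ε * N ≤ (J.card : ℝ) →
        ¬ ∃ E : Submodule ℂ (Fin d → ℂ), Module.finrank ℂ E = ℓ ∧
          ∀ j ∈ J, E ⊓ W.map ((B ^ j).toLinearMap) ≠ ⊥ := by
  classical
  have hℓled : ℓ ≤ d := by omega
  have hq : ℓ + (d - ℓ) = d := by omega
  obtain ⟨N0, hN01, HEXP⟩ := expsum' (Fin d → Bool) ε hε
  refine ⟨N0, hN01, ?_⟩
  intro B θ μ hBθ hμdist W hWrank hW J hJsub hJcard
  rintro ⟨E, hErank, hint⟩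
  -- eigenvalues nonzero
  have hμ0 : ∀ i, μ i ≠ 0 := by
    intro i h
    have h1 : B (θ i) = 0 := by rw [hBθ i, h, zero_smul]
    have h2 : θ i = 0 := by
      have := congrArg B.symm h1
      simpa using this
    exact θ.ne_zero i h2
  -- powers of B on the basis
  have hBpow : ∀ (j : ℕ) (i : Fin d), (B ^ j) (θ i) = μ i ^ j • θ i := by
    intro j
    induction j with
    | zero => intro i; simp
    | succ n ihn =>
      intro i
      have : (B ^ (n + 1)) (θ i) = (B ^ n) (B (θ i)) := by
        rw [pow_succ]
        rfl
      rw [this, hBθ i, map_smul, ihn i, smul_smul, pow_succ]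
      ring_nf
  -- bases of E and W
  let bE : Module.Basis (Fin ℓ) ℂ E := Module.finBasisOfFinrankEq ℂ E hErank
  let bW : Module.Basis (Fin (d - ℓ)) ℂ W := Module.finBasisOfFinrankEq ℂ W hWrank
  let ev : Fin ℓ → (Fin d → ℂ) := fun k => (bE k : Fin d → ℂ)
  let wv : Fin (d - ℓ) → (Fin d → ℂ) := fun k => (bW k : Fin d → ℂ)
  let A : Matrix (Fin d) (Fin ℓ) ℂ := Matrix.of fun i k => θ.equivFun (ev k) i
  let C : Matrix (Fin d) (Fin (d - ℓ)) ℂ := Matrix.of fun i k => θ.equivFun (wv k) i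
  let ec : Fin ℓ ⊕ Fin (d - ℓ) ≃ Fin d := finSumFinEquiv.trans (finCongr hq)
  let uu : Fin d → (Fin d → ℂ) := fun i k' => Sum.elim (fun k => A i k) (fun _ => (0:ℂ)) (ec.symm k')
  let vv : Fin d → (Fin d → ℂ) := fun i k' => Sum.elim (fun _ => (0:ℂ)) (fun k => C i k) (ec.symm k')
  let Mmix : (Fin d → Bool) → Matrix (Fin d) (Fin d) ℂ :=
    fun r => Matrix.of (fun i => if r i then vv i else uu i)
  let co : (Fin d → Bool) → ℂ := fun r => (Mmix r).det
  let lam : (Fin d → Bool) → ℂ := fun r => ∏ i ∈ Finset.univ.filter (fun i => r i = true), μ i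
  let rows : Fin d → (Fin ℓ → ℂ) := fun i k => A i k
  let wgt : Fin d → ℝ := fun i => ‖μ i‖
  have hw0 : ∀ i, 0 < wgt i := fun i => norm_pos_iff.mpr (hμ0 i)
  have hwinj : Function.Injective wgt := by
    intro i j h
    by_contra hne
    exact hμdist i j hne h
  -- C-block injectivity
  have hwind : LinearIndependent ℂ wv :=
    (bW.linearIndependent).map' W.subtype (Submodule.ker_subtype W)
  have hCinj : ∀ S : Finset (Fin d), S.card = d - ℓ → ∀ x : Fin (d - ℓ) → ℂ,
      (∀ i ∈ S, ∑ k, C i k * x k = 0) → x = 0 := by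
    intro S hS x hx
    have hcompl : Sᶜ.card = ℓ := by
      rw [Finset.card_compl, hS]
      simp only [Fintype.card_fin]
      omega
    have hWS := hW Sᶜ hcompl
    set y : Fin d → ℂ := ∑ k, x k • wv k with hy
    have hyW : y ∈ W := Submodule.sum_mem _ (fun k _ => Submodule.smul_mem _ _ (SetLike.coe_mem (bW k)))
    have hcoord : ∀ i, θ.equivFun y i = ∑ k, C i k * x k := by
      intro i
      rw [hy, map_sum]
      rw [Finset.sum_apply]
      refine Finset.sum_congr rfl (fun k _ => ?_)
      rw [map_smul]
      simp [C, mul_comm]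
    have hyspan : y ∈ Submodule.span ℂ (⇑θ '' ((Sᶜ : Finset (Fin d)) : Set (Fin d))) := by
      have hrepr : y = ∑ i ∈ Sᶜ, θ.equivFun y i • θ i := by
        conv_lhs => rw [← θ.sum_equivFun y]
        refine (Finset.sum_subset (Finset.subset_univ _) ?_).symm
        intro i _ hiS
        have hiS' : i ∈ S := by simpa using hiS
        rw [hcoord i, hx i hiS', zero_smul]
      rw [hrepr]
      refine Submodule.sum_mem _ (fun i hi => Submodule.smul_mem _ _ ?_)
      exact Submodule.subset_span ⟨i, by simpa using hi, rfl⟩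
    have hy0 : y = 0 := by
      have : y ∈ W ⊓ Submodule.span ℂ (⇑θ '' ((Sᶜ : Finset (Fin d)) : Set (Fin d))) :=
        Submodule.mem_inf.mpr ⟨hyW, hyspan⟩
      rwa [hWS, Submodule.mem_bot] at this
    funext k
    exact Fintype.linearIndependent_iff.mp hwind x (by rw [← hy, hy0]) k
  -- columns of A independent / rows span
  have heind : LinearIndependent ℂ ev :=
    (bE.linearIndependent).map' E.subtype (Submodule.ker_subtype E)
  have hAcolind : LinearIndependent ℂ (fun k => θ.equivFun (ev k)) :=
    heind.map' θ.equivFun.toLinearMap θ.equivFun.ker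
  have hAcols : ∀ x : Fin ℓ → ℂ, (∀ i, ∑ k, A i k * x k = 0) → x = 0 := by
    intro x hxi
    funext k
    refine Fintype.linearIndependent_iff.mp hAcolind x ?_ k
    funext i
    have h1 : (∑ k, x k • θ.equivFun (ev k)) i = ∑ k, x k * A i k := by
      rw [Finset.sum_apply]
      refine Finset.sum_congr rfl (fun k _ => ?_)
      simp [A]
    rw [h1]
    rw [show ∑ k, x k * A i k = ∑ k, A i k * x k from Finset.sum_congr rfl (fun k _ => mul_comm _ _)]
    rw [hxi i]
    rfl
  have hmulinj : Function.Injective A.mulVecLin := by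
    refine (injective_iff_map_eq_zero _).mpr (fun x hx => ?_)
    refine hAcols x (fun i => ?_)
    have := congrFun hx i
    simpa [Matrix.mulVecLin_apply, Matrix.mulVec, dotProduct] using this
  have hrank : A.rank = ℓ := by
    rw [Matrix.rank, LinearMap.finrank_range_of_inj hmulinj]
    exact Module.finrank_fin_fun ℂ
  have hrangeT : LinearMap.range A.transpose.mulVecLin = ⊤ := by
    apply Submodule.eq_top_of_finrank_eq
    have h1 : Module.finrank ℂ ↥(LinearMap.range A.transpose.mulVecLin) = A.transpose.rank := rfl
    rw [h1, Matrix.rank_transpose, hrank, Module.finrank_fin_fun]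
  have hrowspan : Submodule.span ℂ (Set.range rows) = ⊤ := by
    have h2 : Set.range rows = Set.range (A.transpose.transpose) := by rw [Matrix.transpose_transpose]
    rw [h2, show A.transpose.transpose = A.transpose.col from rfl, ← Matrix.range_mulVecLin]
    exact hrangeT
  -- the optimal set
  obtain ⟨Ts, hTscard, hTsind, hTsspan, hTsmin⟩ :
      ∃ Ts : Finset (Fin d), Ts.card = ℓ ∧ SIndep rows Ts ∧ SSpans rows Ts ∧
        ∀ T : Finset (Fin d), T.card = ℓ → SIndep rows T → SSpans rows T →
          ∏ i ∈ Ts, wgt i ≤ ∏ i ∈ T, wgt i := by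
    have hfinrank : Module.finrank ℂ (Fin ℓ → ℂ) = ℓ := Module.finrank_fin_fun ℂ
    have hspanuniv : SSpans rows Finset.univ := by
      intro j
      refine ⟨fun i => if i = j then 1 else 0, ?_⟩
      simp [ite_smul]
    obtain ⟨T0, hT0sub, hT0i, hT0s⟩ := sspans_shrink rows d Finset.univ (by simp) hspanuniv
    have hT0card : T0.card = ℓ := by
      have h1 : T0.card ≤ ℓ := by
        have := scard_le rows T0 hT0i
        omega
      have h2 : ℓ ≤ T0.card := by
        have := sspans_card_ge rows T0 hT0s hrowspan
        omega
      omega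
    set SF : Finset (Finset (Fin d)) := Finset.univ.powerset.filter
      (fun T => T.card = ℓ ∧ SIndep rows T ∧ SSpans rows T) with hSF
    have hT0mem : T0 ∈ SF := by
      rw [hSF, Finset.mem_filter]
      exact ⟨Finset.mem_powerset.mpr (Finset.subset_univ _), hT0card, hT0i, hT0s⟩
    obtain ⟨Ts, hTsmem, hTsmin⟩ := Finset.exists_min_image SF (fun T => ∏ i ∈ T, wgt i) ⟨T0, hT0mem⟩
    rw [hSF, Finset.mem_filter] at hTsmem
    refine ⟨Ts, hTsmem.2.1, hTsmem.2.2.1, hTsmem.2.2.2, ?_⟩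
    intro T hTc hTi hTsp
    exact hTsmin T (by rw [hSF, Finset.mem_filter]; exact ⟨Finset.mem_powerset.mpr (Finset.subset_univ _), hTc, hTi, hTsp⟩)
  let rstar : Fin d → Bool := fun i => decide (i ∉ Ts)
  have hfilter_rstar : Finset.univ.filter (fun i => rstar i = true) = Tsᶜ := by
    ext i; simp [rstar]
  -- determinant vanishing on J
  -- coordinates of powers
  have hBw : ∀ (j : ℕ) (z : Fin d → ℂ) (i : Fin d),
      θ.equivFun ((B ^ j) z) i = μ i ^ j * θ.equivFun z i := by
    intro j z i
    have h1 : (B ^ j) z = θ.equivFun.symm (fun i' => μ i' ^ j * θ.equivFun z i') := by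
      rw [Module.Basis.equivFun_symm_apply]
      calc (B ^ j) z = (B ^ j) (∑ i', θ.equivFun z i' • θ i') := by rw [θ.sum_equivFun]
        _ = ∑ i', θ.equivFun z i' • (B ^ j) (θ i') := by rw [map_sum]; exact Finset.sum_congr rfl (fun i' _ => (map_smul _ _ _))
        _ = ∑ i', (μ i' ^ j * θ.equivFun z i') • θ i' := by
            refine Finset.sum_congr rfl (fun i' _ => ?_)
            rw [hBpow j i', smul_smul, mul_comm]
    rw [h1, LinearEquiv.apply_symm_apply]
  have hfzero : ∀ j ∈ J, (Matrix.of fun i => uu i + (μ i ^ j) • vv i).det = 0 := by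
    intro j hj
    obtain ⟨x, hxmem, hx0⟩ := (Submodule.ne_bot_iff _).mp (hint j hj)
    obtain ⟨hxE, hxBW⟩ := Submodule.mem_inf.mp hxmem
    obtain ⟨y, hyW, hyx⟩ := Submodule.mem_map.mp hxBW
    set a : Fin ℓ → ℂ := bE.equivFun ⟨x, hxE⟩ with ha
    set b : Fin (d - ℓ) → ℂ := bW.equivFun ⟨y, hyW⟩ with hb
    have hxsum : x = ∑ k, a k • ev k := by
      have h := bE.sum_equivFun ⟨x, hxE⟩
      have h2 := congrArg (E.subtype) h
      simp only [map_sum, map_smul, Submodule.subtype_apply] at h2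
      exact h2.symm
    have hysum : y = ∑ k, b k • wv k := by
      have h := bW.sum_equivFun ⟨y, hyW⟩
      have h2 := congrArg (W.subtype) h
      simp only [map_sum, map_smul, Submodule.subtype_apply] at h2
      exact h2.symm
    have hxcoordA : ∀ i, θ.equivFun x i = ∑ k, a k * A i k := by
      intro i
      rw [hxsum, map_sum, Finset.sum_apply]
      refine Finset.sum_congr rfl (fun k _ => ?_)
      rw [map_smul]
      simp [A]
    have hxB : x = (B ^ j) y := by
      rw [← hyx]
      rfl
    have hxcoordC : ∀ i, θ.equivFun x i = μ i ^ j * ∑ k, C i k * b k := by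
      intro i
      rw [hxB, hBw j y i]
      congr 1
      rw [hysum, map_sum, Finset.sum_apply]
      refine Finset.sum_congr rfl (fun k _ => ?_)
      rw [map_smul]
      simp [C, mul_comm]
    set z : Fin d → ℂ := fun k' => Sum.elim a (fun k => -b k) (ec.symm k') with hz
    have hMz : (Matrix.of fun i => uu i + (μ i ^ j) • vv i).mulVec z = 0 := by
      funext i
      have h1 : (Matrix.of fun i => uu i + (μ i ^ j) • vv i).mulVec z i
          = ∑ k', (uu i k' + μ i ^ j * vv i k') * z k' := by
        simp [Matrix.mulVec, dotProduct]
      rw [h1, ← Equiv.sum_comp ec (fun k' => (uu i k' + μ i ^ j * vv i k') * z k'),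
        Fintype.sum_sum_type]
      have h2 : ∀ k : Fin ℓ, (uu i (ec (Sum.inl k)) + μ i ^ j * vv i (ec (Sum.inl k))) * z (ec (Sum.inl k))
          = a k * A i k := by
        intro k
        simp [uu, vv, hz, Equiv.symm_apply_apply, mul_comm]
      have h3 : ∀ k : Fin (d - ℓ), (uu i (ec (Sum.inr k)) + μ i ^ j * vv i (ec (Sum.inr k))) * z (ec (Sum.inr k))
          = -(μ i ^ j * (C i k * b k)) := by
        intro k
        simp [uu, vv, hz, Equiv.symm_apply_apply]
        ring
      rw [Finset.sum_congr rfl (fun k _ => h2 k), Finset.sum_congr rfl (fun k _ => h3 k)]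
      rw [Finset.sum_neg_distrib, ← Finset.mul_sum, ← hxcoordA i, ← hxcoordC i]
      ring_nf
      rfl
    have hane : a ≠ 0 := by
      intro h
      apply hx0
      rw [hxsum, h]
      simp
    have hzne : z ≠ 0 := by
      intro h
      apply hane
      funext k
      have := congrFun h (ec (Sum.inl k))
      simpa [hz, Equiv.symm_apply_apply] using this
    exact Matrix.exists_mulVec_eq_zero_iff.mp ⟨z, hzne, hMz⟩
  
  -- expansion
  have hexpand : ∀ j : ℕ, (Matrix.of fun i => uu i + (μ i ^ j) • vv i).det
      = ∑ r : Fin d → Bool, co r * lam r ^ j := by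
    intro j
    set g : Fin d → Bool → (Fin d → ℂ) := fun i b => if b then (μ i ^ j) • vv i else uu i with hg
    have key := (Matrix.detRowAlternating (n := Fin d) (R := ℂ)).toMultilinearMap.map_sum (g := g)
    have hrows : (fun i => ∑ b : Bool, g i b) = fun i => uu i + (μ i ^ j) • vv i := by
      funext i
      rw [Fintype.sum_bool]
      simp [hg, add_comm]
    rw [hrows] at key
    have h1 : (Matrix.of fun i => uu i + (μ i ^ j) • vv i).det
        = Matrix.detRowAlternating.toMultilinearMap (fun i => uu i + (μ i ^ j) • vv i) := rfl
    rw [h1, key]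
    refine Finset.sum_congr rfl (fun r _ => ?_)
    have h2 : (fun i => g i (r i))
        = fun i => (if r i then μ i ^ j else 1) • (if r i then vv i else uu i) := by
      funext i
      by_cases h : r i <;> simp [hg, h]
    rw [h2, MultilinearMap.map_smul_univ]
    have h3 : (∏ i, if r i = true then μ i ^ j else 1) = lam r ^ j := by
      rw [← Finset.prod_filter (fun i => r i = true) (fun i => μ i ^ j), Finset.prod_pow]
    have h4 : Matrix.detRowAlternating.toMultilinearMap (fun i => if r i then vv i else uu i)
        = co r := rfl
    rw [h3, h4, smul_eq_mul, mul_comm]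
  -- dominant coefficient nonzero
  have es : ↑Ts ≃ Fin ℓ := Ts.equivFinOfCardEq hTscard
  set Q : Matrix (Fin ℓ) (Fin ℓ) ℂ := Matrix.of fun s k => A ((es.symm s) : Fin d) k with hQ
  have hQdet : Q.det ≠ 0 := by
    intro h0
    obtain ⟨g, hg0, hgv⟩ := Matrix.exists_vecMul_eq_zero_iff.mpr h0
    set g' : Fin d → ℂ := fun i => if h : i ∈ Ts then g (es ⟨i, h⟩) else 0 with hg'
    have hsum : ∑ i ∈ Ts, g' i • rows i = 0 := by
      funext k
      have h1 : (∑ i ∈ Ts, g' i • rows i) k = ∑ i ∈ Ts, g' i * A i k := by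
        rw [Finset.sum_apply]
        exact Finset.sum_congr rfl (fun i _ => rfl)
      rw [h1, ← Finset.sum_attach Ts (fun i => g' i * A i k)]
      have h2 : ∀ s : ↑Ts, g' s.1 * A s.1 k = g (es s) * Q (es s) k := by
        intro s
        simp only [hg', dif_pos s.2, hQ]
        congr 2 <;> rw [Equiv.symm_apply_apply]
      rw [Finset.sum_congr rfl (fun s _ => h2 s), ← Finset.univ_eq_attach]
      rw [Equiv.sum_comp es (fun t => g t * Q t k)]
      have := congrFun hgv k
      simpa [Matrix.vecMul, dotProduct] using this
    have hzero := hTsind g' hsum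
    apply hg0
    funext t
    have h3 := hzero ((es.symm t) : Fin d) (es.symm t).2
    simp only [hg', dif_pos (es.symm t).2] at h3
    rw [show (⟨(es.symm t : Fin d), (es.symm t).2⟩ : ↑Ts) = es.symm t from rfl,
      Equiv.apply_symm_apply] at h3
    exact h3
  have hcostar : co rstar ≠ 0 := by
    intro h0
    obtain ⟨z, hzne, hMz⟩ := Matrix.exists_mulVec_eq_zero_iff.mpr h0
    set x1 : Fin ℓ → ℂ := fun k => z (ec (Sum.inl k)) with hx1
    set x2 : Fin (d - ℓ) → ℂ := fun k => z (ec (Sum.inr k)) with hx2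
    have hrowval : ∀ i, ∑ k', Mmix rstar i k' * z k'
        = ∑ k, Mmix rstar i (ec (Sum.inl k)) * x1 k
          + ∑ k, Mmix rstar i (ec (Sum.inr k)) * x2 k := by
      intro i
      rw [← Equiv.sum_comp ec (fun k' => Mmix rstar i k' * z k'), Fintype.sum_sum_type]
    have hroweq : ∀ i, ∑ k', Mmix rstar i k' * z k' = 0 := by
      intro i
      have := congrFun hMz i
      simpa [Matrix.mulVec, dotProduct] using this
    have hTsrow : ∀ i ∈ Ts, ∑ k, A i k * x1 k = 0 := by
      intro i hi
      have hri : rstar i = false := by simp [rstar, hi]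
      have h1 := (hrowval i).symm.trans (hroweq i)
      have h2 : ∀ k : Fin ℓ, Mmix rstar i (ec (Sum.inl k)) * x1 k = A i k * x1 k := by
        intro k
        simp [Mmix, hri, uu, Equiv.symm_apply_apply]
      have h3 : ∀ k : Fin (d - ℓ), Mmix rstar i (ec (Sum.inr k)) * x2 k = 0 := by
        intro k
        simp [Mmix, hri, uu, Equiv.symm_apply_apply]
      rw [Finset.sum_congr rfl (fun k _ => h2 k), Finset.sum_congr rfl (fun k _ => h3 k)] at h1
      simpa using h1
    have hTscrow : ∀ i ∈ Tsᶜ, ∑ k, C i k * x2 k = 0 := by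
      intro i hi
      have hi' : i ∉ Ts := Finset.mem_compl.mp hi
      have hri : rstar i = true := by simp [rstar, hi']
      have h1 := (hrowval i).symm.trans (hroweq i)
      have h2 : ∀ k : Fin ℓ, Mmix rstar i (ec (Sum.inl k)) * x1 k = 0 := by
        intro k
        simp [Mmix, hri, vv, Equiv.symm_apply_apply]
      have h3 : ∀ k : Fin (d - ℓ), Mmix rstar i (ec (Sum.inr k)) * x2 k = C i k * x2 k := by
        intro k
        simp [Mmix, hri, vv, Equiv.symm_apply_apply]
      rw [Finset.sum_congr rfl (fun k _ => h2 k), Finset.sum_congr rfl (fun k _ => h3 k)] at h1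
      simpa using h1
    have hx2zero : x2 = 0 := by
      refine hCinj Tsᶜ ?_ x2 hTscrow
      rw [Finset.card_compl, hTscard]
      simp
    have hx1zero : x1 = 0 := by
      by_contra hne
      apply hQdet
      refine Matrix.exists_mulVec_eq_zero_iff.mp ⟨x1, hne, ?_⟩
      funext t
      have := hTsrow ((es.symm t) : Fin d) (es.symm t).2
      simpa [Matrix.mulVec, dotProduct, hQ] using this
    apply hzne
    funext k'
    have h4 : z k' = z (ec (ec.symm k')) := by rw [Equiv.apply_symm_apply]
    rw [h4]
    rcases h5 : ec.symm k' with k | k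
    · exact congrFun hx1zero k
    · exact congrFun hx2zero k
  -- domination
  have hlamabs : ∀ r : Fin d → Bool,
      ‖lam r‖ = ∏ i ∈ Finset.univ.filter (fun i => r i = true), wgt i := by
    intro r
    exact norm_prod _ _
  have hdom : ∀ r : Fin d → Bool, r ≠ rstar →
      co r = 0 ∨ ‖lam r‖ < ‖lam rstar‖ := by
    intro r hrne
    set Sr : Finset (Fin d) := Finset.univ.filter (fun i => r i = true) with hSr
    have hmemSr : ∀ i, i ∈ Sr ↔ r i = true := by intro i; simp [hSr]
    -- helper for kernel vectors giving co r = 0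
    have hker : ∀ z : Fin d → ℂ, z ≠ 0 → (Mmix r).mulVec z = 0 → co r = 0 := by
      intro z hz hMz
      exact Matrix.exists_mulVec_eq_zero_iff.mp ⟨z, hz, hMz⟩
    have hrowval : ∀ (z : Fin d → ℂ) i, (Mmix r).mulVec z i
        = ∑ k, Mmix r i (ec (Sum.inl k)) * z (ec (Sum.inl k))
          + ∑ k, Mmix r i (ec (Sum.inr k)) * z (ec (Sum.inr k)) := by
      intro z i
      have h1 : (Mmix r).mulVec z i = ∑ k', Mmix r i k' * z k' := by
        simp [Matrix.mulVec, dotProduct]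
      rw [h1, ← Equiv.sum_comp ec (fun k' => Mmix r i k' * z k'), Fintype.sum_sum_type]
    rcases Nat.lt_trichotomy Sr.card (d - ℓ) with hlt | heq | hgt
    · -- too few W-rows : inr columns dependent
      left
      have hfr : Module.finrank ℂ (↑Sr → ℂ) < Module.finrank ℂ (Fin (d - ℓ) → ℂ) := by
        rw [Module.finrank_fin_fun, Module.finrank_pi]
        simpa [Fintype.card_coe] using hlt
      obtain ⟨x2, hx2ne, hx2z⟩ := notinj_of_finrank_lt
        ((Matrix.of fun (s : ↑Sr) k => C s.1 k).mulVecLin) hfr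
      set z : Fin d → ℂ := fun k' => Sum.elim (fun _ => (0:ℂ)) x2 (ec.symm k') with hz
      have hzinl : ∀ k, z (ec (Sum.inl k)) = 0 := by
        intro k; simp [hz, Equiv.symm_apply_apply]
      have hzinr : ∀ k, z (ec (Sum.inr k)) = x2 k := by
        intro k; simp [hz, Equiv.symm_apply_apply]
      refine hker z ?_ ?_
      · obtain ⟨k, hk⟩ := exists_ne_zero_coord x2 hx2ne
        intro h
        exact hk (by rw [← hzinr k, h]; rfl)
      · funext i
        rw [hrowval z i]
        by_cases hri : r i = true
        · have h2 : ∀ k : Fin ℓ, Mmix r i (ec (Sum.inl k)) * z (ec (Sum.inl k)) = 0 := by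
            intro k; rw [hzinl k]; ring
          have h3 : ∀ k : Fin (d - ℓ), Mmix r i (ec (Sum.inr k)) * z (ec (Sum.inr k))
              = C i k * x2 k := by
            intro k; rw [hzinr k]; simp [Mmix, hri, vv, Equiv.symm_apply_apply]
          rw [Finset.sum_congr rfl (fun k _ => h2 k), Finset.sum_congr rfl (fun k _ => h3 k)]
          have h4 := congrFun hx2z ⟨i, (hmemSr i).mpr hri⟩
          simpa [Matrix.mulVecLin_apply, Matrix.mulVec, dotProduct] using h4
        · have h2 : ∀ k : Fin ℓ, Mmix r i (ec (Sum.inl k)) * z (ec (Sum.inl k)) = 0 := by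
            intro k; rw [hzinl k]; ring
          have h3 : ∀ k : Fin (d - ℓ), Mmix r i (ec (Sum.inr k)) * z (ec (Sum.inr k)) = 0 := by
            intro k
            have : Mmix r i (ec (Sum.inr k)) = 0 := by
              simp [Mmix, hri, uu, Equiv.symm_apply_apply]
            rw [this]; ring
          rw [Finset.sum_congr rfl (fun k _ => h2 k), Finset.sum_congr rfl (fun k _ => h3 k)]
          simp
    · -- the main case : Sr.card = d - ℓ
      have hcompl : Srᶜ.card = ℓ := by
        rw [Finset.card_compl, heq]
        simp only [Fintype.card_fin]
        omega
      by_cases hind : SIndep rows Srᶜ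
      · -- strict domination via minimality
        right
        have hfinrank : Module.finrank ℂ (Fin ℓ → ℂ) = ℓ := Module.finrank_fin_fun ℂ
        have hspans : SSpans rows Srᶜ := sspans_of_card rows Srᶜ hind (by rw [hcompl, hfinrank])
        have hTne : Srᶜ ≠ Ts := by
          intro hTeq
          apply hrne
          funext i
          have h1 : (r i = true) ↔ (rstar i = true) := by
            rw [hmemSr i |>.symm]
            have h2 : i ∈ Sr ↔ i ∉ Srᶜ := by simp
            rw [h2, hTeq]
            simp [rstar]
          rcases Bool.dichotomy (r i) with h | h <;> rcases Bool.dichotomy (rstar i) with h' | h'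
          · rw [h, h']
          · rw [h'] at h1; rw [h] at h1; exact absurd (h1.mpr rfl).symm (by simp [h])
          · rw [h] at h1; exact absurd (h1.mp rfl) (by simp [h'])
          · rw [h, h']
        have hstrict := min_strict rows wgt hw0 hwinj ℓ Ts hTscard hTsind hTsspan hTsmin
          Srᶜ hcompl hind hspans hTne
        rw [hlamabs r, hlamabs rstar, hfilter_rstar, ← hSr]
        have hPuniv1 : (∏ i ∈ Sr, wgt i) * ∏ i ∈ Srᶜ, wgt i = ∏ i, wgt i := by
          rw [Finset.prod_mul_prod_compl]
        have hPuniv2 : (∏ i ∈ Ts, wgt i) * ∏ i ∈ Tsᶜ, wgt i = ∏ i, wgt i := by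
          rw [Finset.prod_mul_prod_compl]
        have hp1 : (0:ℝ) < ∏ i ∈ Sr, wgt i := Finset.prod_pos (fun i _ => hw0 i)
        have hp2 : (0:ℝ) < ∏ i ∈ Srᶜ, wgt i := Finset.prod_pos (fun i _ => hw0 i)
        have hp3 : (0:ℝ) < ∏ i ∈ Ts, wgt i := Finset.prod_pos (fun i _ => hw0 i)
        have hp4 : (0:ℝ) < ∏ i ∈ Tsᶜ, wgt i := Finset.prod_pos (fun i _ => hw0 i)
        nlinarith
      · -- dependent rows : co r = 0 via a left kernel vector
        left
        rw [SIndep] at hind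
        push_neg at hind
        obtain ⟨g, hg0, i0, hi0, hgi0⟩ := hind
        set z : Fin d → ℂ := fun i => if i ∈ Srᶜ then g i else 0 with hz
        have hvm : Matrix.vecMul z (Mmix r) = 0 := by
          funext k'
          have h1 : Matrix.vecMul z (Mmix r) k' = ∑ i, z i * Mmix r i k' := by
            simp [Matrix.vecMul, dotProduct]
          have h2 : ∑ i, z i * Mmix r i k' = ∑ i ∈ Srᶜ, g i * uu i k' := by
            rw [← Finset.sum_subset (Finset.subset_univ Srᶜ)
              (fun i _ hni => by simp only [hz]; rw [if_neg hni, zero_mul])]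
            refine Finset.sum_congr rfl (fun i hi => ?_)
            have hri : ¬ (r i = true) := by
              have := Finset.mem_compl.mp hi
              rwa [hmemSr i] at this
            have hm : Mmix r i k' = uu i k' := by
              simp only [Mmix, Matrix.of_apply, if_neg hri]
            simp only [hz]
            rw [if_pos hi, hm]
          have h3 : ∑ i ∈ Srᶜ, g i * uu i k' = 0 := by
            rcases hcs : ec.symm k' with k | k
            · have h5 : ∀ i ∈ Srᶜ, g i * uu i k' = g i * A i k := by
                intro i _
                have : uu i k' = A i k := by simp [uu, hcs]
                rw [this]
              rw [Finset.sum_congr rfl h5]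
              have h6 := congrFun hg0 k
              rw [Finset.sum_apply] at h6
              simpa using h6
            · have h5 : ∀ i ∈ Srᶜ, g i * uu i k' = 0 := by
                intro i _
                have : uu i k' = 0 := by simp [uu, hcs]
                rw [this, mul_zero]
              rw [Finset.sum_congr rfl h5, Finset.sum_const_zero]
          rw [h1, h2, h3]
          rfl
        have hzne : z ≠ 0 := by
          intro h
          apply hgi0
          have h7 := congrFun h i0
          simp only [hz, Pi.zero_apply] at h7
          rwa [if_pos hi0] at h7
        exact Matrix.exists_vecMul_eq_zero_iff.mp ⟨z, hzne, hvm⟩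
    · -- too many W-rows : inl columns dependent
      left
      have hfr : Module.finrank ℂ (↑(Srᶜ) → ℂ) < Module.finrank ℂ (Fin ℓ → ℂ) := by
        rw [Module.finrank_fin_fun, Module.finrank_pi]
        have hSrle : Sr.card ≤ d := by simpa using Finset.card_le_univ Sr
        simp only [Fintype.card_coe, Finset.card_compl, Fintype.card_fin]
        omega
      obtain ⟨x1, hx1ne, hx1z⟩ := notinj_of_finrank_lt
        ((Matrix.of fun (s : ↑(Srᶜ)) k => A s.1 k).mulVecLin) hfr
      set z : Fin d → ℂ := fun k' => Sum.elim x1 (fun _ => (0:ℂ)) (ec.symm k') with hz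
      have hzinl : ∀ k, z (ec (Sum.inl k)) = x1 k := by
        intro k; simp [hz, Equiv.symm_apply_apply]
      have hzinr : ∀ k, z (ec (Sum.inr k)) = 0 := by
        intro k; simp [hz, Equiv.symm_apply_apply]
      refine hker z ?_ ?_
      · obtain ⟨k, hk⟩ := exists_ne_zero_coord x1 hx1ne
        intro h
        exact hk (by rw [← hzinl k, h]; rfl)
      · funext i
        rw [hrowval z i]
        by_cases hri : r i = true
        · have h2 : ∀ k : Fin ℓ, Mmix r i (ec (Sum.inl k)) * z (ec (Sum.inl k)) = 0 := by
            intro k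
            have : Mmix r i (ec (Sum.inl k)) = 0 := by
              simp [Mmix, hri, vv, Equiv.symm_apply_apply]
            rw [this]; ring
          have h3 : ∀ k : Fin (d - ℓ), Mmix r i (ec (Sum.inr k)) * z (ec (Sum.inr k)) = 0 := by
            intro k; rw [hzinr k]; ring
          rw [Finset.sum_congr rfl (fun k _ => h2 k), Finset.sum_congr rfl (fun k _ => h3 k)]
          simp
        · have h2 : ∀ k : Fin ℓ, Mmix r i (ec (Sum.inl k)) * z (ec (Sum.inl k))
              = A i k * x1 k := by
            intro k; rw [hzinl k]; simp [Mmix, hri, uu, Equiv.symm_apply_apply]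
          have h3 : ∀ k : Fin (d - ℓ), Mmix r i (ec (Sum.inr k)) * z (ec (Sum.inr k)) = 0 := by
            intro k; rw [hzinr k]; ring
          rw [Finset.sum_congr rfl (fun k _ => h2 k), Finset.sum_congr rfl (fun k _ => h3 k)]
          have hiSc : i ∈ Srᶜ := Finset.mem_compl.mpr (fun hmem => hri ((hmemSr i).mp hmem))
          have h4 := congrFun hx1z ⟨i, hiSc⟩
          simpa [Matrix.mulVecLin_apply, Matrix.mulVec, dotProduct] using h4
  have hlamstar : lam rstar ≠ 0 := Finset.prod_ne_zero_iff.mpr (fun i _ => hμ0 i)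
  obtain ⟨j, hjJ, hjne⟩ := HEXP N0 le_rfl co lam rstar hcostar hlamstar hdom J hJsub hJcard
  exact hjne (by rw [← hexpand j]; exact hfzero j hjJ)
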